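/- Proposition 5.7 (stabilisers and the kernel). Let (X,Y) be a G-composite projection graph with modified distances and BGIT constant C, equipped with a composite rotating family with rotating control Θ_rot satisfying the transfer property and the Greendlinger shortening property with constant Θ_short = (Θ_rot − Θ_0)/2 − 2Θ_0 − 3κ, and assume 3Θ_rot/10 > 2C + 3κ + 5Θ_0/2; let N = ⟨Γ_x : x ∈ Y⟩. Then for every vertex v of X: Stab_G(v) ∩ N = ⟨ Γ_w ∩ Stab_G(v) : w ∈ Y ⟩ = ⟨ Γ_w : w ∈ Y ∖ Act(v) ⟩. -/

import Mathlib

/-- A composite projection system with modified distances on a set `Y` partitioned into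
`m` pieces (given by the colouring `col : Y → Fin m`), acted on by a group `G`
by isomorphisms of the system. -/
structure CPS (G : Type) (Y : Type) [Group G] [MulAction G Y] (m : ℕ) : Type where
  /-- the piece (colour) of a point -/
  col : Y → Fin m
  /-- the active set of a point -/
  Act : Y → Set Y
  /-- the projection distance `d^π_y(x,z)` (meaningful when `x, z ∈ Act(y) \ {y}`) -/
  dpi : Y → Y → Y → ℝ
  /-- the modified distance `d_y(x,z)` (meaningful when `x, y, z` lie in one piece) -/
  dmod : Y → Y → Y → ℝ
  theta : ℝ
  Theta : ℝ
  kappa : ℝ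
  theta_pos : 0 < theta
  Theta_pos : 0 < Theta
  kappa_pos : 0 < kappa
  act_piece : ∀ x y : Y, col x = col y → x ∈ Act y
  act_symm : ∀ x y : Y, x ∈ Act y ↔ y ∈ Act x
  dpi_nonneg : ∀ y x z : Y, 0 ≤ dpi y x z
  dpi_symm : ∀ y x z : Y, x ∈ Act y → z ∈ Act y → x ≠ y → z ≠ y → dpi y x z = dpi y z x
  dpi_tri : ∀ y w x z : Y, w ∈ Act y → x ∈ Act y → z ∈ Act y → w ≠ y → x ≠ y → z ≠ y →
    dpi y w x ≤ dpi y w z + dpi y z x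
  behrstock : ∀ x y z : Y, x ∈ Act y → z ∈ Act y → x ≠ y → z ≠ y →
    x ∈ Act z → y ∈ Act z → x ≠ z → y ≠ z → min (dpi y x z) (dpi z x y) ≤ theta
  dpi_proper : ∀ x z : Y, col x = col z →
    {y : Y | col y = col x ∧ x ∈ Act y ∧ z ∈ Act y ∧ x ≠ y ∧ z ≠ y ∧ theta ≤ dpi y x z}.Finite
  separation : ∀ y z : Y, z ∈ Act y → z ≠ y → dpi y z z < theta
  inaction : ∀ x z y : Y, x ∉ Act z → x ∈ Act y → z ∈ Act y → x ≠ y → z ≠ y → dpi y x z ≤ theta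
  finite_filling : ∀ Z : Set Y, ∃ F : Finset Y, ↑F ⊆ Z ∧
    (⋃ x ∈ Z, Act x) ⊆ ⋃ x ∈ (F : Set Y), Act x
  dmod_nonneg : ∀ y x z : Y, 0 ≤ dmod y x z
  dmod_symm : ∀ y x z : Y, col x = col y → col z = col y → x ≠ y → z ≠ y →
    dmod y x z = dmod y z x
  dmod_le_dpi : ∀ y x z : Y, col x = col y → col z = col y → x ≠ y → z ≠ y → x ≠ z →
    dpi y x z - kappa ≤ dmod y x z ∧ dmod y x z ≤ dpi y x z
  dmod_tri : ∀ y x z w : Y, col x = col y → col z = col y → col w = col y →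
    x ≠ y → z ≠ y → w ≠ y → x ≠ z → x ≠ w → z ≠ w →
    dmod y x z - kappa ≤ dmod y x w + dmod y z w
  dmod_min : ∀ x y z : Y, col x = col y → col z = col y → x ≠ y → x ≠ z → y ≠ z →
    min (dmod y x z) (dmod x y z) ≤ kappa
  dmod_mono : ∀ w x y z : Y, col x = col w → col y = col w → col z = col w →
    x ≠ w → y ≠ w → z ≠ w → x ≠ y → x ≠ z → y ≠ z →
    Theta ≤ dmod y x z → dmod w x y ≤ dmod w x z ∧ dmod w y z ≤ dmod w x z
  dmod_proper : ∀ x z : Y, col x = col z → x ≠ z →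
    {y : Y | col y = col x ∧ y ≠ x ∧ y ≠ z ∧ Theta ≤ dmod y x z}.Finite
  smul_col : ∀ (g : G) (x y : Y), col x = col y → col (g • x) = col (g • y)
  smul_act : ∀ (g : G) (x y : Y), x ∈ Act y → (g • x) ∈ Act (g • y)
  smul_dang : ∀ (g : G) (y x z : Y), x ∈ Act y → z ∈ Act y → x ≠ y → z ≠ y →
    (if col (g • x) = col (g • y) ∧ col (g • z) = col (g • y)
      then dmod (g • y) (g • x) (g • z) else dpi (g • y) (g • x) (g • z)) =
    (if col x = col y ∧ col z = col y then dmod y x z else dpi y x z)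

namespace CPS

variable {G Y : Type} [Group G] [MulAction G Y] {m : ℕ}

/-- `S.Dfnd y x z` : the projection distance `d^⦟_y(x,z)` is defined,
i.e. `x, z ∈ Act(y) \ {y}`. -/
def Dfnd (S : CPS G Y m) (y x z : Y) : Prop :=
  x ∈ S.Act y ∧ z ∈ S.Act y ∧ x ≠ y ∧ z ≠ y

/-- The projection distance `d^⦟_y(x,z)`: the modified distance if `x, y, z` all lie in the
same piece, and `d^π_y(x,z)` otherwise. -/
def dang (S : CPS G Y m) (y x z : Y) : ℝ :=
  if S.col x = S.col y ∧ S.col z = S.col y then S.dmod y x z else S.dpi y x z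

/-- The constant `Θ₀ = 2Θ + 3κ`. -/
def Th0 (S : CPS G Y m) : ℝ := 2 * S.Theta + 3 * S.kappa

end CPS

/-- A composite rotating family with rotating control `Θrot` on a composite projection
system acted on by `G`. -/
structure CRF {G Y : Type} [Group G] [MulAction G Y] {m : ℕ} (S : CPS G Y m) : Type where
  /-- the rotation subgroups -/
  Γ : Y → Subgroup G
  /-- the rotating control -/
  Throt : ℝ
  Throt_pos : 0 < Throt
  stab : ∀ x : Y, ∀ γ ∈ Γ x, γ • x = x
  infinite : ∀ x : Y, (Γ x : Set G).Infinite
  rot_fix : ∀ x y : Y, (y = x ∨ y ∉ S.Act x) → ∀ γ ∈ Γ x, γ • y = y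
  rot_fix_dang : ∀ x y : Y, (y = x ∨ y ∉ S.Act x) → ∀ γ ∈ Γ x, ∀ u v : Y,
    S.Dfnd y u v → S.dang y (γ • u) (γ • v) = S.dang y u v
  proper_isotropy : ∀ (R : ℝ) (x y : Y), y ∈ S.Act x → y ≠ x →
    {γ : G | γ ∈ Γ x ∧ S.dang x y (γ • y) < R}.Finite
  conj : ∀ (g : G) (x : Y) (γ : G), γ ∈ Γ x ↔ g * γ * g⁻¹ ∈ Γ (g • x)
  comm : ∀ x z : Y, x ∉ S.Act z → ∀ a ∈ Γ x, ∀ b ∈ Γ z, a * b = b * a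
  large_rot : ∀ x y z : Y, S.col x = S.col y → S.col z = S.col y → x ≠ y → z ≠ y →
    S.dmod y x z ≤ S.Theta → ∀ γ ∈ Γ y, γ ≠ 1 → Throt ≤ S.dmod y x (γ • z)

namespace CRF

variable {G Y : Type} [Group G] [MulAction G Y] {m : ℕ} {S : CPS G Y m}

/-- The kernel `N = ⟨Γ_x : x ∈ Y⟩`. -/
def N (R : CRF S) : Subgroup G := Subgroup.closure (⋃ x : Y, (R.Γ x : Set G))

/-- The Greendlinger shortening property with constant `Θshort`: there is a complexity
function on `N` with values in a well-ordered set (the ordinals), attaining its minimum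
exactly at `1`, which can be lowered by a suitable large rotation. -/
def Greendlinger (R : CRF S) (Θshort : ℝ) : Prop :=
  ∃ c : G → Ordinal.{0},
    (∀ γ ∈ R.N, γ ≠ (1 : G) → c 1 < c γ) ∧
    (∀ γ ∈ R.N, γ ≠ (1 : G) → ∀ x : Y, ∃ s : Y, ∃ γs ∈ R.Γ s,
      c (γs * γ) < c γ ∧
      (x ∉ S.Act s ∨ (x ∈ S.Act s ∧ γ • x ∈ S.Act s ∧ x ≠ s ∧ γ • x ≠ s ∧
        Θshort < S.dang s x (γ • x))))

/-- `xt` is a transfer point for `x` in the piece `i`. -/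
def IsTransferPt (R : CRF S) (x : Y) (i : Fin m) (xt : Y) : Prop :=
  S.col xt = i ∧
  (∀ γ ∈ R.Γ x, ∀ z : Y, S.col z = i → S.Dfnd z (γ • xt) xt →
    S.dang z (γ • xt) xt ≤ S.Th0) ∧
  (∀ y : Y, S.col y = i → y ∈ S.Act x →
    {γ : G | γ ∈ R.Γ x ∧ ¬ S.dang y x (γ • xt) ≤ S.kappa}.Finite) ∧
  (∃ γ ∈ R.Γ x, ∀ y : Y, S.col y = i → y ∈ S.Act x →
    S.dang y x (γ • xt) ≤ S.kappa ∨ S.dang y x xt ≤ S.kappa)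

/-- The transfer property (Transfer Lemma): every point has a transfer point in
every piece. -/
def Transfer (R : CRF S) : Prop := ∀ (x : Y) (i : Fin m), ∃ xt : Y, R.IsTransferPt x i xt

end CRF

/-- A walk in a graph is a geodesic if its length realises the graph distance between
its endpoints. -/
def IsGeodesic {V : Type} (X : SimpleGraph V) {a b : V} (w : X.Walk a b) : Prop :=
  w.length = X.dist a b

/-- Every geodesic triangle is δ-slim: each side is contained in the δ-neighbourhood of
the union of the other two sides. -/
def SlimTriangles {V : Type} (X : SimpleGraph V) (δ : ℝ) : Prop :=
  ∀ (a b c : V) (w₁ : X.Walk a b) (w₂ : X.Walk b c) (w₃ : X.Walk a c),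
    IsGeodesic X w₁ → IsGeodesic X w₂ → IsGeodesic X w₃ →
    ∀ v ∈ w₁.support, ∃ u : V, (u ∈ w₂.support ∨ u ∈ w₃.support) ∧ (X.dist v u : ℝ) ≤ δ

/-- The quotient graph of a graph by a group action: vertices are the orbits, and two
distinct orbits are adjacent iff they have adjacent representatives. -/
def quotGraph (H : Type) [Group H] {V : Type} [MulAction H V] (X : SimpleGraph V) :
    SimpleGraph (Quotient (MulAction.orbitRel H V)) where
  Adj a b := a ≠ b ∧ ∃ x y : V, Quotient.mk (MulAction.orbitRel H V) x = a ∧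
    Quotient.mk (MulAction.orbitRel H V) y = b ∧ X.Adj x y
  symm := by
    constructor
    rintro a b ⟨hab, x, y, hx, hy, hxy⟩
    exact ⟨hab.symm, y, x, hy, hx, hxy.symm⟩
  loopless := by
    constructor
    rintro a ⟨hab, -⟩
    exact hab rfl

/-- The quotient map from a graph to its quotient by a group action. -/
def qmap (H : Type) [Group H] {V : Type} [MulAction H V] (v : V) :
    Quotient (MulAction.orbitRel H V) := Quotient.mk _ v

section GraphDefs

variable {G Y : Type} [Group G] [MulAction G Y] {m : ℕ}

/-- The bounded geodesic image property with constant `C`. -/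
def BGIT (S : CPS G Y m) (X : SimpleGraph Y) (C : ℝ) : Prop :=
  ∀ s x z : Y, S.col x = S.col s → S.col z = S.col s → x ≠ s → z ≠ s →
    C < S.dmod s x z → ∀ w : X.Walk x z, IsGeodesic X w → ∃ v ∈ w.support, X.dist v s = 1

/-- `G` acts on the graph `X` by graph automorphisms. -/
def GraphEquiv (G : Type) [Group G] {Y : Type} [MulAction G Y] (X : SimpleGraph Y) : Prop :=
  ∀ (g : G) (x y : Y), X.Adj x y → X.Adj (g • x) (g • y)

/-- Each rotation subgroup fixes every vertex adjacent to its apex. -/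
def FixNbrs {S : CPS G Y m} (R : CRF S) (X : SimpleGraph Y) : Prop :=
  ∀ s v : Y, X.Adj v s → ∀ γ ∈ R.Γ s, γ • v = v

/-- `g` is loxodromic on `X`. -/
def IsLox (X : SimpleGraph Y) (g : G) : Prop :=
  ∃ (x₀ : Y) (lam : ℝ), 0 < lam ∧ ∀ n : ℤ, lam * |(n : ℝ)| ≤ (X.dist x₀ (g ^ n • x₀) : ℝ)

/-- `g` is WPD for the action of `G` on `X`. -/
def IsWPD (X : SimpleGraph Y) (g : G) : Prop :=
  ∀ (x₀ : Y) (r : ℝ), 0 ≤ r → ∃ n₀ : ℕ, ∀ n : ℕ, n₀ ≤ n →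
    {h : G | (X.dist x₀ (h • x₀) : ℝ) ≤ r ∧
      (X.dist (g ^ n • x₀) ((h * g ^ n) • x₀) : ℝ) ≤ r}.Finite

/-- `φ` and `ψ` are independent loxodromic elements with respect to `x₀`. -/
def Indep (X : SimpleGraph Y) (φ ψ : G) (x₀ : Y) : Prop :=
  ∀ R : ℝ, {p : ℤ × ℤ | (X.dist (φ ^ p.1 • x₀) (ψ ^ p.2 • x₀) : ℝ) ≤ R}.Finite

/-- The image of `g` in `G/N` is loxodromic on `X/N`. -/
def IsLoxQuot (N : Subgroup G) (X : SimpleGraph Y) (g : G) : Prop :=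
  ∃ (x₀ : Y) (lam : ℝ), 0 < lam ∧ ∀ n : ℤ, lam * |(n : ℝ)| ≤
    ((quotGraph ↥N X).dist (qmap ↥N x₀) (qmap ↥N (g ^ n • x₀)) : ℝ)

/-- The image of `g` in `G/N` is WPD for the action of `G/N` on `X/N`. -/
def IsWPDQuot (N : Subgroup G) (X : SimpleGraph Y) (g : G) : Prop :=
  ∀ (x₀ : Y) (r : ℝ), 0 ≤ r → ∃ n₀ : ℕ, ∀ n : ℕ, n₀ ≤ n →
    {hbar : G ⧸ N | ∃ h : G, (QuotientGroup.mk h : G ⧸ N) = hbar ∧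
      ((quotGraph ↥N X).dist (qmap ↥N x₀) (qmap ↥N (h • x₀)) : ℝ) ≤ r ∧
      ((quotGraph ↥N X).dist (qmap ↥N (g ^ n • x₀))
        (qmap ↥N ((h * g ^ n) • x₀)) : ℝ) ≤ r}.Finite

/-- The images of `φ` and `ψ` in `G/N` are independent with respect to the image
of `x₀` in `X/N`. -/
def QuotIndep (N : Subgroup G) (X : SimpleGraph Y) (φ ψ : G) (x₀ : Y) : Prop :=
  ∀ R : ℝ, {p : ℤ × ℤ | ((quotGraph ↥N X).dist (qmap ↥N (φ ^ p.1 • x₀))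
    (qmap ↥N (ψ ^ p.2 • x₀)) : ℝ) ≤ R}.Finite

/-- The action of `G/N` on `X/N` is non-elementary: it admits two independent
loxodromic elements. -/
def NonElemQuot (N : Subgroup G) (X : SimpleGraph Y) : Prop :=
  ∃ (φ ψ : G) (x₀ : Y), IsLoxQuot N X φ ∧ IsLoxQuot N X ψ ∧ QuotIndep N X φ ψ x₀

end GraphDefs

/-- Proposition 5.7: the intersection of a vertex stabiliser with the kernel N is
generated by the rotation subgroups it contains, namely those with inactive apex. -/
theorem stabiliser_intersect_kernel
    {G Y : Type} [Group G] [MulAction G Y] {m : ℕ}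
    (S : CPS G Y m) (R : CRF S) (X : SimpleGraph Y) (δ C : ℝ)
    (hδ : 0 ≤ δ) (hC : 0 < C)
    (hconn : X.Connected)
    (hslim : SlimTriangles X δ)
    (hequiv : GraphEquiv G X)
    (hbgit : BGIT S X C)
    (hfix : FixNbrs R X)
    (hgreen : R.Greendlinger ((R.Throt - S.Th0) / 2 - 2 * S.Th0 - 3 * S.kappa))
    (hbig : 2 * C + 3 * S.kappa + 5 * S.Th0 / 2 < 3 * R.Throt / 10)
    (htrans : R.Transfer)
    (v : Y) :
    MulAction.stabilizer G v ⊓ R.N =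
      Subgroup.closure (⋃ w : Y, ((R.Γ w : Set G) ∩ (MulAction.stabilizer G v : Set G))) ∧
    MulAction.stabilizer G v ⊓ R.N =
      Subgroup.closure (⋃ w ∈ {w : Y | w ∉ S.Act v}, (R.Γ w : Set G)) := by
  
  classical
  -- notation
  set B : Subgroup G :=
    Subgroup.closure (⋃ w ∈ {w : Y | w ∉ S.Act v}, (R.Γ w : Set G)) with hBdef
  set A : Subgroup G :=
    Subgroup.closure (⋃ w : Y, ((R.Γ w : Set G) ∩ (MulAction.stabilizer G v : Set G)))
      with hAdef
  have hTh0 : S.Th0 = 2 * S.Theta + 3 * S.kappa := rfl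
  set Θs : ℝ := (R.Throt - S.Th0) / 2 - 2 * S.Th0 - 3 * S.kappa with hΘs
  have hκpos := S.kappa_pos
  have hΘpos := S.Theta_pos
  have hκΘs : 2 * S.kappa < Θs := by rw [hΘs, hTh0]; nlinarith [hbig, hTh0]
  have hCΘs : C < Θs := by rw [hΘs, hTh0]; nlinarith [hbig, hTh0]
  -- Case (b) of the Greendlinger property is contradictory
  have caseB : ∀ s : Y, v ∈ S.Act s → v ≠ s → Θs < S.dang s v v → False := by
    intro s hvAct hvne hlt
    by_cases hcol : S.col v = S.col s
    · -- same piece : use BGIT on the trivial geodesic, then FixNbrs + proper isotropy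
      have hdang : S.dang s v v = S.dmod s v v := by
        rw [CPS.dang, if_pos ⟨hcol, hcol⟩]
      rw [hdang] at hlt
      have hCd : C < S.dmod s v v := lt_trans hCΘs hlt
      have hgeo : IsGeodesic X (SimpleGraph.Walk.nil : X.Walk v v) := by
        unfold IsGeodesic
        simp [SimpleGraph.dist_self]
      obtain ⟨u, hu, hud⟩ := hbgit s v v hcol hcol hvne hvne hCd
        (SimpleGraph.Walk.nil : X.Walk v v) hgeo
      rw [SimpleGraph.Walk.support_nil, List.mem_singleton] at hu
      rw [hu] at hud
      have hadj : X.Adj v s := SimpleGraph.dist_eq_one_iff_adj.mp hud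
      have hfixall : ∀ γ ∈ R.Γ s, γ • v = v := hfix s v hadj
      have hsub : (R.Γ s : Set G) ⊆
          {γ : G | γ ∈ R.Γ s ∧ S.dang s v (γ • v) < S.dmod s v v + 1} := by
        intro γ hγ
        refine ⟨hγ, ?_⟩
        rw [hfixall γ hγ, hdang]
        linarith
      exact R.infinite s
        ((R.proper_isotropy (S.dmod s v v + 1) s v hvAct hvne).subset hsub)
    · -- different pieces : transfer
      have hdang : S.dang s v v = S.dpi s v v := by
        rw [CPS.dang, if_neg (fun h => hcol h.1)]
      rw [hdang] at hlt
      obtain ⟨t, hcolt, hT1, hT2, hT3⟩ := htrans v (S.col s)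
      have hsActv : s ∈ S.Act v := (S.act_symm s v).mpr hvAct
      have hF : {γ : G | γ ∈ R.Γ v ∧ ¬ S.dang s v (γ • t) ≤ S.kappa}.Finite :=
        hT2 s rfl hsActv
      have htnev : t ≠ v := by
        intro h; exact hcol (h ▸ hcolt)
      -- find a good rotation γ
      have key2 : ∃ γ : G, γ ∈ R.Γ v ∧ S.dang s v (γ • t) ≤ S.kappa ∧
          (γ • t) ∈ S.Act s ∧ γ • t ≠ s := by
        by_cases htAct : t ∈ S.Act v
        · -- pigeonhole on colours
          have hfib : ∃ c1 : Fin m, {γ : G | γ ∈ R.Γ v ∧ S.col (γ • t) = c1}.Infinite := by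
            by_contra hno
            push_neg at hno
            have hsub : (R.Γ v : Set G) ⊆
                ⋃ c : Fin m, {γ : G | γ ∈ R.Γ v ∧ S.col (γ • t) = c} := by
              intro γ hγ
              exact Set.mem_iUnion.mpr ⟨S.col (γ • t), hγ, rfl⟩
            exact R.infinite v ((Set.finite_iUnion hno).subset hsub)
          obtain ⟨c1, hc1⟩ := hfib
          obtain ⟨γ1, hγ11, hγ12⟩ := hc1.nonempty
          have hK : {γ : G | γ ∈ R.Γ v ∧ S.col (γ • t) = S.col t}.Infinite := by
            have himg := (Set.infinite_image_iff
              ((mul_right_injective γ1⁻¹).injOn)).mpr hc1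
            refine himg.mono ?_
            rintro _ ⟨γ2, ⟨hγ21, hγ22⟩, rfl⟩
            refine ⟨mul_mem (inv_mem hγ11) hγ21, ?_⟩
            have hcc : S.col (γ1 • t) = S.col (γ2 • t) := hγ12.trans hγ22.symm
            have := S.smul_col γ1⁻¹ (γ1 • t) (γ2 • t) hcc
            rw [inv_smul_smul, ← mul_smul] at this
            exact this.symm
          have hFbad : {γ : G | γ ∈ R.Γ v ∧ γ • t = s}.Finite := by
            rcases Set.eq_empty_or_nonempty {γ : G | γ ∈ R.Γ v ∧ γ • t = s} with he | hne
            · rw [he]; exact Set.finite_empty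
            obtain ⟨γ1, hγ11, hγ12⟩ := hne
            have hF0 := R.proper_isotropy (S.dang v t t + 1) v t htAct htnev
            refine (hF0.image (γ1 * ·)).subset ?_
            rintro γ2 ⟨hγ21, hγ22⟩
            refine ⟨γ1⁻¹ * γ2, ⟨mul_mem (inv_mem hγ11) hγ21, ?_⟩, by group⟩
            have hfixt : (γ1⁻¹ * γ2) • t = t := by
              rw [mul_smul, hγ22, ← hγ12, inv_smul_smul]
            rw [hfixt]
            linarith
          obtain ⟨γ, hγK, hγnot⟩ := (hK.diff (hF.union hFbad)).nonempty
          rw [Set.mem_union] at hγnot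
          push_neg at hγnot
          refine ⟨γ, hγK.1, ?_, ?_, ?_⟩
          · by_contra hle
            exact hγnot.1 ⟨hγK.1, lt_of_not_ge hle⟩
          · exact S.act_piece (γ • t) s (hγK.2.trans hcolt)
          · intro h
            exact hγnot.2 ⟨hγK.1, h⟩
        · -- Γ_v fixes t
          obtain ⟨γ, hγ, hγnF⟩ := ((R.infinite v).diff hF).nonempty
          have hfixt : γ • t = t := R.rot_fix v t (Or.inr htAct) γ hγ
          have htnes : t ≠ s := by
            intro h; exact htAct (h ▸ hsActv)
          refine ⟨γ, hγ, ?_, ?_, ?_⟩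
          · by_contra hle
            exact hγnF ⟨hγ, hle⟩
          · rw [hfixt]; exact S.act_piece t s hcolt
          · rw [hfixt]; exact htnes
      obtain ⟨γ, hγ, hκ, hγtAct, hγtne⟩ := key2
      have hκ' : S.dpi s v (γ • t) ≤ S.kappa := by
        rwa [CPS.dang, if_neg (fun h => hcol h.1)] at hκ
      have htri := S.dpi_tri s v v (γ • t) hvAct hvAct hγtAct hvne hvne hγtne
      have hsym := S.dpi_symm s (γ • t) v hγtAct hvAct hγtne hvne
      rw [hsym] at htri
      linarith
  -- key lemma : Stab ∩ N ≤ B via Greendlinger induction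
  obtain ⟨c, -, hc2⟩ := hgreen
  have key : ∀ (o : Ordinal) (g : G), c g = o → g ∈ R.N → g • v = v → g ∈ B := by
    intro o
    induction o using Ordinal.induction with
    | h o IH =>
      intro g hco hgN hgv
      rcases eq_or_ne g 1 with rfl | hg1
      · exact one_mem _
      obtain ⟨s, γs, hγs, hltc, hdisj⟩ := hc2 g hgN hg1 v
      rcases hdisj with hvs | ⟨h1, _, h3, _, h5⟩
      · have hγsv : γs • v = v := R.rot_fix s v (Or.inr hvs) γs hγs
        have hsnot : s ∈ {w : Y | w ∉ S.Act v} := by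
          intro hs
          exact hvs ((S.act_symm v s).mpr hs)
        have hγsB : γs ∈ B :=
          Subgroup.subset_closure (Set.mem_iUnion₂.mpr ⟨s, hsnot, hγs⟩)
        have hγsN : γs ∈ R.N :=
          Subgroup.subset_closure (Set.mem_iUnion.mpr ⟨s, hγs⟩)
        have hIH : γs * g ∈ B :=
          IH (c (γs * g)) (hco ▸ hltc) (γs * g) rfl (mul_mem hγsN hgN)
            (by rw [mul_smul, hgv, hγsv])
        have hgr : γs⁻¹ * (γs * g) = g := by group
        exact hgr ▸ mul_mem (inv_mem hγsB) hIH
      · rw [hgv] at h5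
        exact (caseB s h1 h3 h5).elim
  have hSNB : MulAction.stabilizer G v ⊓ R.N ≤ B := by
    intro g hg
    rw [Subgroup.mem_inf] at hg
    exact key (c g) g rfl hg.2 (MulAction.mem_stabilizer_iff.mp hg.1)
  -- B ≤ A
  have hBA : B ≤ A := by
    apply Subgroup.closure_mono
    rintro u hu
    rw [Set.mem_iUnion₂] at hu
    obtain ⟨w, hw, hu⟩ := hu
    refine Set.mem_iUnion.mpr ⟨w, hu, ?_⟩
    have hvnw : v ∉ S.Act w := fun h => hw ((S.act_symm v w).mp h)
    exact MulAction.mem_stabilizer_iff.mpr (R.rot_fix w v (Or.inr hvnw) u hu)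
  -- A ≤ Stab ∩ N
  have hASN : A ≤ MulAction.stabilizer G v ⊓ R.N := by
    rw [hAdef]
    apply (Subgroup.closure_le _).mpr
    rintro u hu
    rw [Set.mem_iUnion] at hu
    obtain ⟨w, huΓ, hus⟩ := hu
    rw [SetLike.mem_coe, Subgroup.mem_inf]
    exact ⟨hus, Subgroup.subset_closure (Set.mem_iUnion.mpr ⟨w, huΓ⟩)⟩
  have hB : MulAction.stabilizer G v ⊓ R.N = B :=
    le_antisymm hSNB (le_trans hBA hASN)
  have hA : MulAction.stabilizer G v ⊓ R.N = A :=
    le_antisymm (le_trans hSNB hBA) hASN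
  exact ⟨hA, hB⟩
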